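/- Let 0 < a ≤ 1, 0 < q < 1 and y > 0. The 3×3 real symmetric matrix H := [[1, q, y^2], [q, q, a^2 y^2], [y^2, a^2 y^2, y^2]] is positive semidefinite if and only if y ≤ m_1(a,q) := √( q(1−q) / ((a^2−q)^2 + q(1−q)) ). -/

import Mathlib

theorem sixPointTest_H_posSemidef_iff (a q y : ℝ)
    (ha0 : 0 < a) (ha1 : a ≤ 1) (hq0 : 0 < q) (hq1 : q < 1) (hy : 0 < y) :
    (Matrix.PosSemidef
      !![1, q, y ^ 2;
         q, q, a ^ 2 * y ^ 2;
         y ^ 2, a ^ 2 * y ^ 2, y ^ 2])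
      ↔ y ≤ Real.sqrt (q * (1 - q) / ((a ^ 2 - q) ^ 2 + q * (1 - q))) := by
  have hD : 0 < (a ^ 2 - q) ^ 2 + q * (1 - q) := by nlinarith
  have hq : 0 < q * (1 - q) := by nlinarith
  constructor
  · intro h
    have h2 := h.dotProduct_mulVec_nonneg ![-(q * y ^ 2 * (1 - a ^ 2)), -(y ^ 2 * (a ^ 2 - q)), q * (1 - q)]
    simp [dotProduct, Matrix.mulVec, Fin.sum_univ_three] at h2
    rw [Real.le_sqrt' hy, le_div_iff₀ hD]
    nlinarith [mul_pos hq (mul_pos hq (mul_pos hy hy)), sq_nonneg y, h2]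
  · intro hle
    have h2 : y ^ 2 ≤ q * (1 - q) / ((a ^ 2 - q) ^ 2 + q * (1 - q)) :=
      (Real.le_sqrt' hy).1 hle
    have h3 : y ^ 2 * ((a ^ 2 - q) ^ 2 + q * (1 - q)) ≤ q * (1 - q) := by
      rw [← le_div_iff₀ hD]; exact h2
    refine Matrix.PosSemidef.of_dotProduct_mulVec_nonneg ?_ ?_
    · ext i j
      fin_cases i <;> fin_cases j <;> simp [Matrix.conjTranspose_apply]
    · intro x
      have hx : dotProduct (star x)
          ((!![1, q, y ^ 2; q, q, a ^ 2 * y ^ 2;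
          y ^ 2, a ^ 2 * y ^ 2, y ^ 2] : Matrix (Fin 3) (Fin 3) ℝ).mulVec x) =
          x 0 * x 0 + 2 * q * (x 0 * x 1) + 2 * y ^ 2 * (x 0 * x 2)
          + q * (x 1 * x 1) + 2 * (a ^ 2 * y ^ 2) * (x 1 * x 2)
          + y ^ 2 * (x 2 * x 2) := by
        simp [dotProduct, Matrix.mulVec, Fin.sum_univ_three]
        ring
      rw [hx]
      nlinarith [sq_nonneg (x 0 + q * x 1 + y ^ 2 * x 2),
        sq_nonneg (q * (1 - q) * x 1 + y ^ 2 * (a ^ 2 - q) * x 2),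
        mul_nonneg (mul_nonneg (sub_nonneg.2 h3) (sq_nonneg y)) (sq_nonneg (x 2)),
        sq_nonneg (x 2), hq.le, hq]
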